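/- arXiv:1508.06359 — 3 statements merged into one kernel-verified Lean document; each statement's English description precedes it below -/
import Mathlib

section
/- For any fixed a > 0 and c > 0, the function b ↦ B(a,b)/B(a,b+c) is monotonically decreasing in b on (0,∞), where B denotes the Beta function. -/
open MeasureTheory intervalIntegral

/-- The Euler Beta function `B(x,y) = ∫₀¹ t^{x-1}(1-t)^{y-1} dt`. -/
noncomputable def betaFn (x y : ℝ) : ℝ :=
  ∫ t in (0:ℝ)..1, t ^ (x - 1) * (1 - t) ^ (y - 1)

lemma integrableOn_beta {x y : ℝ} (hx : 0 < x) (hy : 0 < y) :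
    IntegrableOn (fun t : ℝ => t ^ (x - 1) * (1 - t) ^ (y - 1)) (Set.Ioo 0 1) volume := by
  have h := Complex.betaIntegral_convergent (u := (x : ℂ)) (v := (y : ℂ))
    (by simpa using hx) (by simpa using hy)
  have h2 : IntegrableOn
      (fun t : ℝ => ‖(t : ℂ) ^ ((x : ℂ) - 1) * (1 - (t : ℂ)) ^ ((y : ℂ) - 1)‖)
      (Set.Ioo 0 1) volume :=
    (intervalIntegrable_iff_integrableOn_Ioo_of_le (by norm_num)).mp h.norm
  refine h2.congr_fun (fun t ht => ?_) measurableSet_Ioo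
  have ht0 : (0:ℝ) < t := ht.1
  have ht1 : (0:ℝ) < 1 - t := by linarith [ht.2]
  have e1 : (1 : ℂ) - (t : ℂ) = ((1 - t : ℝ) : ℂ) := by push_cast; ring
  beta_reduce
  rw [norm_mul, e1,
    Complex.norm_cpow_eq_rpow_re_of_pos ht0, Complex.norm_cpow_eq_rpow_re_of_pos ht1]
  norm_num

lemma beta_intervalIntegrable {x y : ℝ} (hx : 0 < x) (hy : 0 < y) :
    IntervalIntegrable (fun t : ℝ => t ^ (x - 1) * (1 - t) ^ (y - 1)) volume 0 1 :=
  (intervalIntegrable_iff_integrableOn_Ioo_of_le (by norm_num)).mpr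
    (integrableOn_beta hx hy)

lemma betaFn_eq (x y : ℝ) :
    betaFn x y = ∫ t in Set.Ioo (0:ℝ) 1, t ^ (x - 1) * (1 - t) ^ (y - 1) := by
  rw [betaFn, intervalIntegral.integral_of_le zero_le_one, integral_Ioc_eq_integral_Ioo]

lemma betaFn_pos {x y : ℝ} (hx : 0 < x) (hy : 0 < y) : 0 < betaFn x y := by
  refine intervalIntegral_pos_of_pos_on (beta_intervalIntegrable hx hy) (fun t ht => ?_)
    one_pos
  have ht0 : (0:ℝ) < t := ht.1
  have ht1 : (0:ℝ) < 1 - t := by linarith [ht.2]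
  positivity

/-- Chebyshev-type correlation inequality. -/
lemma cheb {f g h : ℝ → ℝ} {μ : Measure ℝ} [SigmaFinite μ]
    (hf : Integrable f μ) (hfg : Integrable (fun t => f t * g t) μ)
    (hfh : Integrable (fun t => f t * h t) μ)
    (hfgh : Integrable (fun t => f t * g t * h t) μ)
    (hpos : ∀ᵐ p ∂(μ.prod μ), 0 ≤ f p.1 * f p.2 * ((g p.1 - g p.2) * (h p.1 - h p.2))) :
    (∫ t, f t * g t ∂μ) * ∫ t, f t * h t ∂μ ≤ (∫ t, f t ∂μ) * ∫ t, f t * g t * h t ∂μ := by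
  have hA : Integrable (fun p : ℝ × ℝ => (f p.1 * g p.1 * h p.1) * f p.2) (μ.prod μ) :=
    hfgh.mul_prod hf
  have hB : Integrable (fun p : ℝ × ℝ => (f p.1 * g p.1) * (f p.2 * h p.2)) (μ.prod μ) :=
    hfg.mul_prod hfh
  have hC : Integrable (fun p : ℝ × ℝ => (f p.1 * h p.1) * (f p.2 * g p.2)) (μ.prod μ) :=
    hfh.mul_prod hfg
  have hD : Integrable (fun p : ℝ × ℝ => f p.1 * (f p.2 * g p.2 * h p.2)) (μ.prod μ) :=
    hf.mul_prod hfgh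
  have h0 : 0 ≤ ∫ p, (f p.1 * f p.2 * ((g p.1 - g p.2) * (h p.1 - h p.2))) ∂(μ.prod μ) :=
    integral_nonneg_of_ae hpos
  have hKeq : (fun p : ℝ × ℝ => f p.1 * f p.2 * ((g p.1 - g p.2) * (h p.1 - h p.2)))
      = fun p : ℝ × ℝ => (f p.1 * g p.1 * h p.1) * f p.2 - (f p.1 * g p.1) * (f p.2 * h p.2)
        - (f p.1 * h p.1) * (f p.2 * g p.2) + f p.1 * (f p.2 * g p.2 * h p.2) := by
    funext p; ring
  have hAB : Integrable (fun p : ℝ × ℝ =>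
      (f p.1 * g p.1 * h p.1) * f p.2 - (f p.1 * g p.1) * (f p.2 * h p.2)) (μ.prod μ) :=
    hA.sub hB
  have hABC : Integrable (fun p : ℝ × ℝ =>
      (f p.1 * g p.1 * h p.1) * f p.2 - (f p.1 * g p.1) * (f p.2 * h p.2)
        - (f p.1 * h p.1) * (f p.2 * g p.2)) (μ.prod μ) := hAB.sub hC
  rw [hKeq, integral_add hABC hD, integral_sub hAB hC,
    integral_sub hA hB, integral_prod_mul (fun t => f t * g t * h t) f,
    integral_prod_mul (fun t => f t * g t) (fun t => f t * h t),
    integral_prod_mul (fun t => f t * h t) (fun t => f t * g t),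
    integral_prod_mul f (fun t => f t * g t * h t)] at h0
  nlinarith [h0]

theorem stmt_2 (a c : ℝ) (ha : 0 < a) (hc : 0 < c) :
    AntitoneOn (fun b => betaFn a b / betaFn a (b + c)) (Set.Ioi (0:ℝ)) := by
  intro b1 hb1 b2 hb2 hb
  simp only
  rw [Set.mem_Ioi] at hb1 hb2
  set μ := volume.restrict (Set.Ioo (0:ℝ) 1) with hμ
  set f : ℝ → ℝ := fun t => t ^ (a - 1) * (1 - t) ^ (b1 - 1) with hfdef
  set g : ℝ → ℝ := fun t => (1 - t) ^ (b2 - b1) with hgdef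
  set h : ℝ → ℝ := fun t => (1 - t) ^ c with hhdef
  -- pointwise identities on Ioo 0 1
  have heq2 : Set.EqOn (fun t : ℝ => t ^ (a - 1) * (1 - t) ^ (b2 - 1))
      (fun t => f t * g t) (Set.Ioo 0 1) := by
    intro t ht
    have ht1 : (0:ℝ) < 1 - t := by linarith [ht.2]
    simp only [hfdef, hgdef, mul_assoc, ← Real.rpow_add ht1]
    ring_nf
  have heq1c : Set.EqOn (fun t : ℝ => t ^ (a - 1) * (1 - t) ^ (b1 + c - 1))
      (fun t => f t * h t) (Set.Ioo 0 1) := by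
    intro t ht
    have ht1 : (0:ℝ) < 1 - t := by linarith [ht.2]
    simp only [hfdef, hhdef, mul_assoc, ← Real.rpow_add ht1]
    ring_nf
  have heq2c : Set.EqOn (fun t : ℝ => t ^ (a - 1) * (1 - t) ^ (b2 + c - 1))
      (fun t => f t * g t * h t) (Set.Ioo 0 1) := by
    intro t ht
    have ht1 : (0:ℝ) < 1 - t := by linarith [ht.2]
    simp only [hfdef, hgdef, hhdef, mul_assoc, ← Real.rpow_add ht1]
    ring_nf
  -- integrability
  have hIf : Integrable f μ := integrableOn_beta ha hb1
  have hIfg : Integrable (fun t => f t * g t) μ :=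
    (integrableOn_beta ha hb2).congr_fun heq2 measurableSet_Ioo
  have hIfh : Integrable (fun t => f t * h t) μ :=
    (integrableOn_beta ha (by linarith : (0:ℝ) < b1 + c)).congr_fun heq1c measurableSet_Ioo
  have hIfgh : Integrable (fun t => f t * g t * h t) μ :=
    (integrableOn_beta ha (by linarith : (0:ℝ) < b2 + c)).congr_fun heq2c measurableSet_Ioo
  -- positivity of the kernel
  have hpos : ∀ᵐ p ∂(μ.prod μ),
      0 ≤ f p.1 * f p.2 * ((g p.1 - g p.2) * (h p.1 - h p.2)) := by
    rw [hμ, Measure.prod_restrict]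
    refine Filter.eventually_of_mem
      (self_mem_ae_restrict (measurableSet_Ioo.prod measurableSet_Ioo)) ?_
    rintro ⟨s, t⟩ ⟨hs, ht⟩
    have hs0 : (0:ℝ) < s := hs.1
    have hs1 : (0:ℝ) < 1 - s := by linarith [hs.2]
    have ht0 : (0:ℝ) < t := ht.1
    have ht1 : (0:ℝ) < 1 - t := by linarith [ht.2]
    have hfs : 0 ≤ f s := by simp only [hfdef]; positivity
    have hft : 0 ≤ f t := by simp only [hfdef]; positivity
    refine mul_nonneg (mul_nonneg hfs hft) ?_
    rcases le_total s t with hst | hst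
    · have h1t : (1:ℝ) - t ≤ 1 - s := by linarith
      have hg : g t ≤ g s := Real.rpow_le_rpow ht1.le h1t (by linarith)
      have hh : h t ≤ h s := Real.rpow_le_rpow ht1.le h1t hc.le
      exact mul_nonneg (sub_nonneg.2 hg) (sub_nonneg.2 hh)
    · have h1t : (1:ℝ) - s ≤ 1 - t := by linarith
      have hg : g s ≤ g t := Real.rpow_le_rpow hs1.le h1t (by linarith)
      have hh : h s ≤ h t := Real.rpow_le_rpow hs1.le h1t hc.le
      nlinarith [hg, hh]
  have key := cheb hIf hIfg hIfh hIfgh hpos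
  -- identify the integrals with betaFn values
  have e0 : ∫ t, f t ∂μ = betaFn a b1 := (betaFn_eq a b1).symm
  have e2 : ∫ t, f t * g t ∂μ = betaFn a b2 := by
    rw [betaFn_eq a b2]
    exact (setIntegral_congr_fun measurableSet_Ioo heq2).symm
  have e1c : ∫ t, f t * h t ∂μ = betaFn a (b1 + c) := by
    rw [betaFn_eq a (b1 + c)]
    exact (setIntegral_congr_fun measurableSet_Ioo heq1c).symm
  have e2c : ∫ t, f t * g t * h t ∂μ = betaFn a (b2 + c) := by
    rw [betaFn_eq a (b2 + c)]
    exact (setIntegral_congr_fun measurableSet_Ioo heq2c).symm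
  rw [e0, e2, e1c, e2c] at key
  have hp1 : 0 < betaFn a (b1 + c) := betaFn_pos ha (by linarith)
  have hp2 : 0 < betaFn a (b2 + c) := betaFn_pos ha (by linarith)
  rw [div_le_div_iff₀ hp2 hp1]
  linarith [key]
end

section
/- For all real s ≥ s₀ > 0, (s² - 1)/2 - log(s) ≤ ((s₀ + 2)/(2 s₀)) (1 - s)². -/
theorem stmt_4 (s₀ s : ℝ) (h0 : 0 < s₀) (hs : s₀ ≤ s) :
    (s ^ 2 - 1) / 2 - Real.log s ≤ ((s₀ + 2) / (2 * s₀)) * (1 - s) ^ 2 := by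
  have hsp : 0 < s := lt_of_lt_of_le h0 hs
  have h1 : Real.log s⁻¹ ≤ s⁻¹ - 1 := Real.log_le_sub_one_of_pos (by positivity)
  rw [Real.log_inv] at h1
  have hlog : 1 - s⁻¹ ≤ Real.log s := by linarith
  have heq : (s ^ 2 - 1) / 2 - (1 - s⁻¹) = (1 - s) ^ 2 * (s + 2) / (2 * s) := by
    field_simp; ring
  have key : (1 - s) ^ 2 * (s + 2) / (2 * s) ≤ (s₀ + 2) / (2 * s₀) * (1 - s) ^ 2 := by
    rw [div_mul_eq_mul_div, div_le_div_iff₀ (by positivity) (by positivity)]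
    nlinarith [mul_nonneg (sq_nonneg (1 - s)) (sub_nonneg.mpr hs), sq_nonneg (1 - s)]
  linarith [heq ▸ (sub_le_sub_left hlog ((s ^ 2 - 1) / 2))]
end

section
/- Let h(x) = (1/2)·exp(-|x|) be the density of the standard double-exponential (Laplace) distribution. For any s ≥ s₀ > 0 and any t ∈ ℝ, the Kullback-Leibler divergence satisfies ∫_ℝ h(x)·log( h(x) / ((1/s)·h((x-t)/s)) ) dx ≤ (1/s₀)·(1-s)² + (1/(2s₀))·t². -/
open MeasureTheory Real Set Filter

/-- Density of the standard double-exponential (Laplace) distribution. -/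
noncomputable def laplacePdf (x : ℝ) : ℝ := (1 / 2) * Real.exp (-|x|)

lemma laplacePdf_pos (x : ℝ) : 0 < laplacePdf x := by unfold laplacePdf; positivity

lemma laplacePdf_cont : Continuous laplacePdf := by unfold laplacePdf; fun_prop

lemma int_exp_neg (a : ℝ) : IntegrableOn (fun x : ℝ => Real.exp (-x)) (Ioi a) := by
  simpa using exp_neg_integrableOn_Ioi a one_pos

lemma int_x_exp_neg : IntegrableOn (fun x : ℝ => x * Real.exp (-x)) (Ioi 0) := by
  have h := Real.GammaIntegral_convergent (s := 2) (by norm_num)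
  refine h.congr_fun (fun x hx => ?_) measurableSet_Ioi
  norm_num [Real.rpow_one, mul_comm]

lemma integral_x_exp_neg : ∫ x in Ioi (0:ℝ), x * Real.exp (-x) = 1 := by
  have h := Real.Gamma_eq_integral (s := 2) (by norm_num)
  rw [Real.Gamma_two] at h
  rw [h]
  refine setIntegral_congr_fun measurableSet_Ioi (fun x hx => ?_)
  norm_num [Real.rpow_one, mul_comm]

lemma integrableOn_Iic_neg {f : ℝ → ℝ} (h : IntegrableOn f (Ioi 0)) :
    IntegrableOn (fun x => f (-x)) (Iic 0) := by
  rw [← Measure.map_neg_eq_self (volume : Measure ℝ)]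
  have m : MeasurableEmbedding fun x : ℝ => -x := (Homeomorph.neg ℝ).measurableEmbedding
  rw [m.integrableOn_map_iff]
  simp_rw [Function.comp_def, neg_neg]
  rw [neg_preimage, neg_Iic, neg_zero]
  exact Iff.mpr integrableOn_Ici_iff_integrableOn_Ioi h

lemma integral_comp_neg_real (f : ℝ → ℝ) : ∫ x : ℝ, f (-x) = ∫ x, f x := by
  have m : MeasurePreserving (fun x : ℝ => -x) volume volume :=
    ⟨measurable_neg, Measure.map_neg_eq_self _⟩
  exact m.integral_comp (Homeomorph.neg ℝ).measurableEmbedding f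

lemma integrable_comp_neg_real {f : ℝ → ℝ} (h : Integrable f) :
    Integrable (fun x => f (-x)) := by
  have m : MeasurePreserving (fun x : ℝ => -x) volume volume :=
    ⟨measurable_neg, Measure.map_neg_eq_self _⟩
  simpa [Function.comp_def] using
    (m.integrable_comp_emb (Homeomorph.neg ℝ).measurableEmbedding).mpr h

lemma integral_x_exp_Iic : ∫ x in Iic (0:ℝ), (-x) * Real.exp x = 1 := by
  have h := integral_comp_neg_Iic (0:ℝ) (fun y => y * Real.exp (-y))
  rw [neg_zero] at h
  rw [← integral_x_exp_neg, ← h]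
  refine setIntegral_congr_fun measurableSet_Iic (fun x hx => ?_)
  simp

section tpos
variable {t : ℝ} (ht : 0 ≤ t)

-- explicit forms
lemma eqIic (ht : 0 ≤ t) : EqOn (fun x => (1/2) * (t * Real.exp x) + (1/2) * ((-x) * Real.exp x))
    (fun x => laplacePdf x * |x - t|) (Iic 0) := by
  intro x hx
  simp only [mem_Iic] at hx
  have h1 : |x| = -x := abs_of_nonpos hx
  have h2 : |x - t| = t - x := by rw [abs_of_nonpos (by linarith)]; ring
  simp only [laplacePdf, h1, h2, neg_neg]
  ring

lemma eqIoi (ht : 0 ≤ t) : EqOn (fun x => (1/2) * ((x - t) * Real.exp (-x)))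
    (fun x => laplacePdf x * |x - t|) (Ioi t) := by
  intro x hx
  simp only [mem_Ioi] at hx
  have h1 : |x| = x := abs_of_pos (lt_of_le_of_lt ht hx)
  have h2 : |x - t| = x - t := abs_of_pos (by linarith)
  simp only [laplacePdf, h1, h2]
  ring

lemma intIic (ht : 0 ≤ t) : IntegrableOn (fun x => laplacePdf x * |x - t|) (Iic 0) := by
  refine IntegrableOn.congr_fun ?_ (eqIic ht) measurableSet_Iic
  refine Integrable.add ?_ ?_
  · exact ((integrableOn_exp_Iic 0).const_mul t).const_mul (1/2)
  · have : IntegrableOn (fun x : ℝ => (-x) * Real.exp x) (Iic 0) := by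
      have := integrableOn_Iic_neg int_x_exp_neg
      simpa using this
    exact this.const_mul (1/2)

lemma intIoiT (ht : 0 ≤ t) : IntegrableOn (fun x => laplacePdf x * |x - t|) (Ioi t) := by
  refine IntegrableOn.congr_fun ?_ (eqIoi ht) measurableSet_Ioi
  have h1 : IntegrableOn (fun x : ℝ => x * Real.exp (-x)) (Ioi t) :=
    int_x_exp_neg.mono_set (Ioi_subset_Ioi ht)
  have h2 : IntegrableOn (fun x : ℝ => t * Real.exp (-x)) (Ioi t) :=
    (int_exp_neg t).const_mul t
  have h3 : IntegrableOn (fun x : ℝ => (1/2) * (x * Real.exp (-x) - t * Real.exp (-x))) (Ioi t) :=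
    (h1.sub h2).const_mul (1/2)
  refine IntegrableOn.congr_fun h3 (fun x _ => ?_) measurableSet_Ioi
  ring

lemma intIoc (ht : 0 ≤ t) : IntegrableOn (fun x => laplacePdf x * |x - t|) (Ioc 0 t) :=
  (laplacePdf_cont.mul (continuous_abs.comp (by fun_prop))).integrableOn_Ioc

lemma habs_int_nonneg (ht : 0 ≤ t) : Integrable (fun x => laplacePdf x * |x - t|) := by
  have h1 : IntegrableOn (fun x => laplacePdf x * |x - t|) (Ioi 0) := by
    rw [← Ioc_union_Ioi_eq_Ioi ht]
    exact (intIoc ht).union (intIoiT ht)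
  rw [← integrableOn_univ, ← Iic_union_Ioi (a := (0:ℝ))]
  exact (intIic ht).union h1
end tpos

section vals
variable {t : ℝ}

lemma valIic (ht : 0 ≤ t) :
    ∫ x in Iic (0:ℝ), laplacePdf x * |x - t| = (1/2) * (t + 1) := by
  rw [← setIntegral_congr_fun measurableSet_Iic (eqIic ht)]
  have h1 : IntegrableOn (fun x : ℝ => (1/2) * (t * Real.exp x)) (Iic 0) :=
    ((integrableOn_exp_Iic 0).const_mul t).const_mul (1/2)
  have h2 : IntegrableOn (fun x : ℝ => (1/2) * ((-x) * Real.exp x)) (Iic 0) := by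
    have : IntegrableOn (fun x : ℝ => (-x) * Real.exp x) (Iic 0) := by
      simpa using integrableOn_Iic_neg int_x_exp_neg
    exact this.const_mul (1/2)
  rw [integral_add h1 h2, integral_const_mul, integral_const_mul, integral_const_mul,
    integral_exp_Iic_zero, integral_x_exp_Iic]
  ring

lemma valIoc (ht : 0 ≤ t) :
    ∫ x in Ioc (0:ℝ) t, laplacePdf x * |x - t| = (1/2) * (Real.exp (-t) + t - 1) := by
  have heq : EqOn (fun x => (1/2) * ((t - x) * Real.exp (-x)))
      (fun x => laplacePdf x * |x - t|) (Ioc 0 t) := by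
    intro x hx
    obtain ⟨hx0, hxt⟩ := hx
    have h1 : |x| = x := abs_of_pos hx0
    have h2 : |x - t| = t - x := by rw [abs_of_nonpos (by linarith)]; ring
    simp only [laplacePdf, h1, h2]
    ring
  rw [← setIntegral_congr_fun measurableSet_Ioc heq,
    ← intervalIntegral.integral_of_le ht]
  have hderiv : ∀ x ∈ uIcc (0:ℝ) t, HasDerivAt
      (fun x => (1/2) * ((x + 1 - t) * Real.exp (-x)))
      ((1/2) * ((t - x) * Real.exp (-x))) x := by
    intro x _
    have h1 : HasDerivAt (fun x : ℝ => x + 1 - t) 1 x := by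
      simpa using ((hasDerivAt_id x).add_const 1).sub_const t
    have h2 : HasDerivAt (fun x : ℝ => Real.exp (-x)) (-Real.exp (-x)) x := by
      simpa [Function.comp_def] using (Real.hasDerivAt_exp (-x)).comp x (hasDerivAt_neg x)
    have := (h1.mul h2).const_mul (1/2)
    refine this.congr_deriv ?_
    ring
  have hint : IntervalIntegrable (fun x => (1/2) * ((t - x) * Real.exp (-x))) volume 0 t :=
    (by fun_prop : Continuous fun x : ℝ => (1/2) * ((t - x) * Real.exp (-x))).intervalIntegrable 0 t
  rw [intervalIntegral.integral_eq_sub_of_hasDerivAt hderiv hint]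
  simp [Real.exp_zero]
  ring

lemma valIoi (ht : 0 ≤ t) :
    ∫ x in Ioi t, laplacePdf x * |x - t| = (1/2) * Real.exp (-t) := by
  rw [← setIntegral_congr_fun measurableSet_Ioi (eqIoi ht)]
  have hderiv : ∀ x ∈ Ici t, HasDerivAt
      (fun x => (1/2) * (-(x + 1 - t) * Real.exp (-x)))
      ((1/2) * ((x - t) * Real.exp (-x))) x := by
    intro x _
    have h1 : HasDerivAt (fun x : ℝ => -(x + 1 - t)) (-1) x := by
      simpa [Pi.neg_def] using (((hasDerivAt_id x).add_const 1).sub_const t).neg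
    have h2 : HasDerivAt (fun x : ℝ => Real.exp (-x)) (-Real.exp (-x)) x := by
      simpa [Function.comp_def] using (Real.hasDerivAt_exp (-x)).comp x (hasDerivAt_neg x)
    have := (h1.mul h2).const_mul (1/2)
    refine this.congr_deriv ?_
    ring
  have hint : IntegrableOn (fun x => (1/2) * ((x - t) * Real.exp (-x))) (Ioi t) := by
    have h1 : IntegrableOn (fun x : ℝ => x * Real.exp (-x)) (Ioi t) :=
      int_x_exp_neg.mono_set (Ioi_subset_Ioi ht)
    have h2 : IntegrableOn (fun x : ℝ => t * Real.exp (-x)) (Ioi t) :=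
      (int_exp_neg t).const_mul t
    have h3 : IntegrableOn (fun x : ℝ => (1/2) * (x * Real.exp (-x) - t * Real.exp (-x))) (Ioi t) :=
      (h1.sub h2).const_mul (1/2)
    refine IntegrableOn.congr_fun h3 (fun x _ => ?_) measurableSet_Ioi
    ring
  have htend : Tendsto (fun x => (1/2) * (-(x + 1 - t) * Real.exp (-x))) atTop (nhds 0) := by
    have T1 : Tendsto (fun x : ℝ => x * Real.exp (-x)) atTop (nhds 0) := by
      simpa using tendsto_pow_mul_exp_neg_atTop_nhds_zero 1
    have T2 : Tendsto (fun x : ℝ => Real.exp (-x)) atTop (nhds 0) :=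
      Real.tendsto_exp_neg_atTop_nhds_zero
    have := ((T1.neg.add (T2.const_mul (t - 1))).const_mul (1/2))
    have heq : (fun x : ℝ => (1/2) * (-(x * Real.exp (-x)) + (t-1) * Real.exp (-x)))
        = fun x => (1/2) * (-(x + 1 - t) * Real.exp (-x)) := by
      funext x; ring
    rw [← heq]
    simpa using this
  rw [integral_Ioi_of_hasDerivAt_of_tendsto' hderiv hint htend]
  simp

lemma absInt_nonneg (ht : 0 ≤ t) :
    ∫ x, laplacePdf x * |x - t| = Real.exp (-t) + t := by
  have h1 : IntegrableOn (fun x => laplacePdf x * |x - t|) (Ioi 0) := by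
    rw [← Ioc_union_Ioi_eq_Ioi ht]
    exact (intIoc ht).union (intIoiT ht)
  rw [← intervalIntegral.integral_Iic_add_Ioi (intIic ht) h1]
  have hsplit : ∫ x in Ioi (0:ℝ), laplacePdf x * |x - t|
      = (∫ x in Ioc (0:ℝ) t, laplacePdf x * |x - t|) + ∫ x in Ioi t, laplacePdf x * |x - t| := by
    rw [← Ioc_union_Ioi_eq_Ioi ht]
    exact setIntegral_union (Ioc_disjoint_Ioi le_rfl) measurableSet_Ioi (intIoc ht) (intIoiT ht)
  rw [hsplit, valIic ht, valIoc ht, valIoi ht]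
  ring
end vals

lemma laplacePdf_integrable : Integrable laplacePdf := by
  have hIic : IntegrableOn laplacePdf (Iic 0) := by
    refine IntegrableOn.congr_fun ((integrableOn_exp_Iic 0).const_mul (1/2))
      (fun x hx => ?_) measurableSet_Iic
    simp only [mem_Iic] at hx
    simp [laplacePdf, abs_of_nonpos hx]
  have hIoi : IntegrableOn laplacePdf (Ioi 0) := by
    refine IntegrableOn.congr_fun ((int_exp_neg 0).const_mul (1/2))
      (fun x hx => ?_) measurableSet_Ioi
    simp only [mem_Ioi] at hx
    simp [laplacePdf, abs_of_pos hx]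
  rw [← integrableOn_univ, ← Iic_union_Ioi (a := (0:ℝ))]
  exact hIic.union hIoi

lemma laplacePdf_integral : ∫ x, laplacePdf x = 1 := by
  have hIic : IntegrableOn laplacePdf (Iic 0) := laplacePdf_integrable.integrableOn
  have hIoi : IntegrableOn laplacePdf (Ioi 0) := laplacePdf_integrable.integrableOn
  rw [← intervalIntegral.integral_Iic_add_Ioi hIic hIoi]
  have v1 : ∫ x in Iic (0:ℝ), laplacePdf x = 1/2 := by
    have heq : EqOn (fun x : ℝ => (1/2) * Real.exp x) laplacePdf (Iic 0) := by
      intro x hx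
      simp only [mem_Iic] at hx
      simp [laplacePdf, abs_of_nonpos hx]
    rw [← setIntegral_congr_fun measurableSet_Iic heq, integral_const_mul, integral_exp_Iic_zero]
    norm_num
  have v2 : ∫ x in Ioi (0:ℝ), laplacePdf x = 1/2 := by
    have heq : EqOn (fun x : ℝ => (1/2) * Real.exp (-x)) laplacePdf (Ioi 0) := by
      intro x hx
      simp only [mem_Ioi] at hx
      simp [laplacePdf, abs_of_pos hx]
    rw [← setIntegral_congr_fun measurableSet_Ioi heq, integral_const_mul, integral_exp_neg_Ioi]
    norm_num
  rw [v1, v2]; norm_num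

lemma neg_shift_eq (t : ℝ) :
    (fun x => laplacePdf (-x) * |(-x) - (-t)|) = fun x => laplacePdf x * |x - t| := by
  funext x
  have h1 : laplacePdf (-x) = laplacePdf x := by simp [laplacePdf]
  have h2 : |(-x) - (-t)| = |x - t| := by rw [← abs_neg]; ring_nf
  rw [h1, h2]

lemma habs_int (t : ℝ) : Integrable (fun x => laplacePdf x * |x - t|) := by
  rcases le_or_gt 0 t with ht | ht
  · exact habs_int_nonneg ht
  · have h := integrable_comp_neg_real (habs_int_nonneg (t := -t) (by linarith))
    rw [← neg_shift_eq t]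
    exact h

lemma absInt (t : ℝ) : ∫ x, laplacePdf x * |x - t| = Real.exp (-|t|) + |t| := by
  rcases le_or_gt 0 t with ht | ht
  · rw [abs_of_nonneg ht]; exact absInt_nonneg ht
  · have h := integral_comp_neg_real (fun x => laplacePdf x * |x - (-t)|)
    rw [neg_shift_eq t] at h
    rw [h, absInt_nonneg (t := -t) (by linarith), abs_of_neg ht]

lemma exp_neg_le_quad {u : ℝ} (hu : 0 ≤ u) : Real.exp (-u) ≤ 1 - u + u^2/2 := by
  have hd : ∀ x : ℝ, HasDerivAt (fun y => 1 - y + y^2/2 - Real.exp (-y))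
      (-1 + x + Real.exp (-x)) x := by
    intro x
    have h2 : HasDerivAt (fun y : ℝ => Real.exp (-y)) (-Real.exp (-x)) x := by
      simpa [Function.comp_def] using (Real.hasDerivAt_exp (-x)).comp x (hasDerivAt_neg x)
    have h1 : HasDerivAt (fun y : ℝ => 1 - y + y^2/2) (-1 + x) x := by
      have := ((hasDerivAt_const x (1:ℝ)).sub (hasDerivAt_id x)).add
        ((hasDerivAt_pow 2 x).div_const 2)
      refine this.congr_deriv ?_
      norm_num
    have := h1.sub h2
    refine this.congr_deriv ?_
    ring
  have mono : MonotoneOn (fun y => 1 - y + y^2/2 - Real.exp (-y)) (Ici 0) := by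
    apply monotoneOn_of_deriv_nonneg (convex_Ici 0)
    · exact Continuous.continuousOn (by fun_prop)
    · intro x _; exact (hd x).differentiableAt.differentiableWithinAt
    · intro x hx
      rw [(hd x).deriv]
      have := Real.add_one_le_exp (-x)
      simp only [interior_Ici, mem_Ioi] at hx
      nlinarith
  have h0 := mono (self_mem_Ici) (mem_Ici.mpr hu) hu
  simp only [neg_zero, Real.exp_zero] at h0
  nlinarith [h0]

lemma log_laplacePdf (z : ℝ) : Real.log (laplacePdf z) = Real.log (1/2) - |z| := by
  unfold laplacePdf
  rw [Real.log_mul (by norm_num) (Real.exp_pos _).ne', Real.log_exp]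
  ring

theorem stmt_8 (s₀ s t : ℝ) (h0 : 0 < s₀) (hs : s₀ ≤ s) :
    ∫ x : ℝ, laplacePdf x * Real.log (laplacePdf x / ((1 / s) * laplacePdf ((x - t) / s)))
      ≤ (1 / s₀) * (1 - s) ^ 2 + (1 / (2 * s₀)) * t ^ 2 := by
  have hspos : 0 < s := lt_of_lt_of_le h0 hs
  have hrw : ∀ x : ℝ, laplacePdf x * Real.log (laplacePdf x / ((1 / s) * laplacePdf ((x - t) / s)))
      = Real.log s * laplacePdf x + (1/s) * (laplacePdf x * |x - t|) - laplacePdf x * |x| := by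
    intro x
    have hx := laplacePdf_pos x
    have hy := laplacePdf_pos ((x - t) / s)
    have hden : (0:ℝ) < (1 / s) * laplacePdf ((x - t) / s) := by positivity
    rw [Real.log_div hx.ne' hden.ne',
      Real.log_mul (by positivity : (0:ℝ) < 1/s).ne' hy.ne',
      log_laplacePdf, log_laplacePdf, one_div, Real.log_inv,
      abs_div, abs_of_pos hspos]
    field_simp
    rw [one_div, Real.log_inv]
    ring
  simp_rw [hrw]
  have hA : Integrable (fun x => Real.log s * laplacePdf x) :=
    laplacePdf_integrable.const_mul _
  have hB : Integrable (fun x => (1/s) * (laplacePdf x * |x - t|)) :=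
    (habs_int t).const_mul _
  have hC : Integrable (fun x => laplacePdf x * |x|) := by
    simpa using habs_int 0
  have hAB : Integrable (fun x => Real.log s * laplacePdf x + (1/s) * (laplacePdf x * |x - t|)) :=
    hA.add hB
  rw [integral_sub hAB hC, integral_add hA hB, integral_const_mul, integral_const_mul,
    laplacePdf_integral, absInt t]
  have hC1 : ∫ x, laplacePdf x * |x| = 1 := by
    have := absInt 0
    simpa using this
  rw [hC1]
  -- now pure arithmetic
  have hu : (0:ℝ) ≤ |t| := abs_nonneg t
  have k1 : Real.exp (-|t|) ≤ 1 - |t| + |t|^2/2 := exp_neg_le_quad hu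
  have k2 : Real.log s ≤ s - 1 := Real.log_le_sub_one_of_pos hspos
  have e1 : Real.exp (-|t|) + |t| ≤ 1 + t^2/2 := by nlinarith [sq_abs t]
  have hb : (1/s) * (Real.exp (-|t|) + |t|) ≤ (1/s) * (1 + t^2/2) :=
    mul_le_mul_of_nonneg_left e1 (by positivity)
  have A : s - 2 + (1/s) * (1 + t^2/2) = (s-1)^2/s + t^2/(2*s) := by
    field_simp
    ring
  have d1 : (s-1)^2/s ≤ (s-1)^2/s₀ := by
    apply div_le_div_of_nonneg_left (sq_nonneg _) h0 hs
  have d2 : t^2/(2*s) ≤ t^2/(2*s₀) := by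
    apply div_le_div_of_nonneg_left (sq_nonneg _) (by positivity) (by linarith)
  have B : (1/s₀) * (1-s)^2 + (1/(2*s₀)) * t^2 = (s-1)^2/s₀ + t^2/(2*s₀) := by
    field_simp
    ring
  linarith
end
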